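/- Let a > 4, let Q(X) = a·X²·(1 − X) − X, and let c₋ = 1/2 − √(1/4 − 1/a), c₊ = 1/2 + √(1/4 − 1/a). If u : [0, ∞) → ℝ is differentiable with u'(t) = Q(u(t)) for all t ≥ 0 and u(0) ∈ (c₋, 1), then u(t) → c₊ as t → ∞. -/

import Mathlib

open Set Filter

private lemma gron_pin {a cm c : ℝ} (ha : 0 < a) {u : ℝ → ℝ}
    (hd : ∀ t, 0 ≤ t → HasDerivAt u (-a * u t * (u t - cm) * (u t - c)) t)
    {t₀ : ℝ} (ht₀ : 0 ≤ t₀) (h0 : u t₀ = c) :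
    ∀ t, t₀ ≤ t → u t = c := by
  intro T hT
  have hu_cont : ContinuousOn u (Icc t₀ T) := fun t ht =>
    ((hd t (ht₀.trans ht.1)).continuousAt).continuousWithinAt
  obtain ⟨M, hM⟩ := (isCompact_Icc : IsCompact (Icc t₀ T)).exists_bound_of_continuousOn hu_cont
  set C := a * (|M| * (|M| + |cm|)) with hC
  have key : ∀ t ∈ Icc t₀ T, ‖u t - c‖ ≤ gronwallBound 0 C 0 (t - t₀) := by
    apply norm_le_gronwallBound_of_norm_deriv_right_le
      (f' := fun t => -a * u t * (u t - cm) * (u t - c))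
    · exact (hu_cont.sub continuousOn_const)
    · intro x hx
      exact ((hd x (ht₀.trans hx.1)).sub_const c).hasDerivWithinAt
    · simp [h0]
    · intro x hx
      have hux : |u x| ≤ |M| := le_trans (hM x (Ico_subset_Icc_self hx)) (le_abs_self M)
      have h1 : ‖(-a * u x * (u x - cm) * (u x - c))‖
          = (a * (|u x| * |u x - cm|)) * ‖u x - c‖ := by
        simp only [Real.norm_eq_abs, abs_mul, abs_neg, abs_of_pos ha]
        ring
      rw [h1]
      have h2 : |u x - cm| ≤ |M| + |cm| := (abs_sub _ _).trans (by gcongr)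
      have h3 : a * (|u x| * |u x - cm|) ≤ C := by
        rw [hC]; gcongr
      have : (0:ℝ) ≤ ‖u x - c‖ := norm_nonneg _
      calc a * (|u x| * |u x - cm|) * ‖u x - c‖ ≤ C * ‖u x - c‖ := by gcongr
        _ = C * ‖u x - c‖ + 0 := by ring
  have := key T ⟨hT, le_refl T⟩
  rw [gronwallBound_ε0] at this
  simp only [zero_mul, Real.norm_eq_abs] at this
  have := abs_nonpos_iff.mp this
  linarith [this]

private lemma tri_mono {a x1 y1 z1 x2 y2 z2 : ℝ} (ha : 0 ≤ a) (h1 : 0 ≤ x1) (h2 : 0 ≤ y1)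
    (h3 : 0 ≤ z1) (hx : x1 ≤ x2) (hy : y1 ≤ y2) (hz : z1 ≤ z2) :
    a * x1 * y1 * z1 ≤ a * x2 * y2 * z2 := by
  have hx2 : 0 ≤ x2 := h1.trans hx
  have hy2 : 0 ≤ y2 := h2.trans hy
  exact mul_le_mul (mul_le_mul (mul_le_mul le_rfl hx h1 ha) hy h2 (mul_nonneg ha hx2))
    hz h3 (mul_nonneg (mul_nonneg ha hx2) hy2)

set_option maxHeartbeats 1600000 in
theorem stmt_2 (a : ℝ) (ha : 4 < a)
    (Q : ℝ → ℝ) (hQ : ∀ X, Q X = a * X ^ 2 * (1 - X) - X)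
    (cm cp : ℝ) (hcm : cm = 1 / 2 - Real.sqrt (1 / 4 - 1 / a))
    (hcp : cp = 1 / 2 + Real.sqrt (1 / 4 - 1 / a))
    (u : ℝ → ℝ)
    (hderiv : ∀ t : ℝ, 0 ≤ t → HasDerivAt u (Q (u t)) t)
    (h0 : u 0 ∈ Set.Ioo cm 1) :
    Filter.Tendsto u Filter.atTop (nhds cp) := by
  have ha0 : (0:ℝ) < a := by linarith
  have h14 : (0:ℝ) ≤ 1 / 4 - 1 / a := by
    have : 1 / a < 1 / 4 := by
      rw [div_lt_div_iff₀ ha0 (by norm_num)]; linarith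
    linarith
  set s := Real.sqrt (1 / 4 - 1 / a) with hs
  have hs2 : s ^ 2 = 1 / 4 - 1 / a := Real.sq_sqrt h14
  have hs0 : 0 < s := Real.sqrt_pos.mpr (by
    have : 1 / a < 1 / 4 := by
      rw [div_lt_div_iff₀ ha0 (by norm_num)]; linarith
    linarith)
  have hs12 : s < 1 / 2 := by
    nlinarith [hs2, one_div_pos.mpr ha0]
  have hcm0 : 0 < cm := by rw [hcm]; linarith
  have hcmcp : cm < cp := by rw [hcm, hcp]; linarith
  have hcp1 : cp < 1 := by rw [hcp]; linarith
  have hcp0 : 0 < cp := lt_trans hcm0 hcmcp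
  -- factorization
  have hQfac : ∀ X, Q X = -a * X * (X - cm) * (X - cp) := by
    intro X
    rw [hQ, hcm, hcp]
    have h1a : a * (1 / a) = 1 := mul_one_div_cancel (ne_of_gt ha0)
    linear_combination (-(a * X)) * hs2 + X * h1a
  have hd : ∀ t, 0 ≤ t → HasDerivAt u (-a * u t * (u t - cm) * (u t - cp)) t :=
    fun t ht => (hQfac (u t)) ▸ hderiv t ht
  have hu_contOn : ∀ T : ℝ, ContinuousOn u (Icc 0 T) := fun T t ht =>
    ((hd t ht.1).continuousAt).continuousWithinAt
  obtain ⟨h0m, h01⟩ := h0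
  rcases lt_trichotomy (u 0) cp with hlt | heq | hgt
  · -- Case u 0 < cp : increasing towards cp
    -- no upward crossing
    have hle_cp : ∀ t, 0 ≤ t → u t ≤ cp := by
      intro T hT
      by_contra hcon
      push_neg at hcon
      obtain ⟨t₀, ht₀mem, ht₀⟩ := intermediate_value_Icc hT (hu_contOn T)
        (⟨le_of_lt hlt, le_of_lt hcon⟩ : cp ∈ Icc (u 0) (u T))
      have := gron_pin ha0 hd ht₀mem.1 ht₀ T ht₀mem.2
      linarith
    -- lower bound: u t > cm
    have hgt_cm : ∀ t, 0 ≤ t → cm < u t := by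
      intro T hT
      by_contra hcon
      push_neg at hcon
      set K := {t ∈ Icc 0 T | u t ≤ cm} with hK
      have hKcomp : IsCompact K := by
        have : IsClosed K := by
          have : K = Icc 0 T ∩ u ⁻¹' (Iic cm) := by ext t; simp [hK, and_comm]
          rw [this]
          exact (hu_contOn T).preimage_isClosed_of_isClosed isClosed_Icc isClosed_Iic
        exact isCompact_Icc.of_isClosed_subset this (fun t ht => ht.1)
      have hKne : K.Nonempty := ⟨T, ⟨hT, le_refl T⟩, hcon⟩
      set t₁ := sInf K with ht₁
      have ht₁K : t₁ ∈ K := hKcomp.sInf_mem hKne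
      have ht₁0 : 0 ≤ t₁ := ht₁K.1.1
      have ht₁T : t₁ ≤ T := ht₁K.1.2
      have hmid : ∀ x, x ∈ Ico 0 t₁ → cm < u x := by
        intro x hx
        by_contra hcmx
        push_neg at hcmx
        have : x ∈ K := ⟨⟨hx.1, le_trans (le_of_lt hx.2) ht₁T⟩, hcmx⟩
        exact absurd (csInf_le hKcomp.bddBelow this) (not_le.mpr hx.2)
      -- u monotone on [0, t₁]
      have hmono : MonotoneOn u (Icc 0 t₁) := by
        apply monotoneOn_of_deriv_nonneg (convex_Icc 0 t₁)
          (fun t ht => ((hd t ht.1).continuousAt).continuousWithinAt)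
        · intro x hx
          rw [interior_Icc] at hx
          exact ((hd x (le_of_lt hx.1)).differentiableAt).differentiableWithinAt
        · intro x hx
          rw [interior_Icc] at hx
          rw [(hd x (le_of_lt hx.1)).deriv]
          have h1 : cm < u x := hmid x ⟨le_of_lt hx.1, hx.2⟩
          have h2 : u x ≤ cp := hle_cp x (le_of_lt hx.1)
          have hpos : 0 ≤ a * u x * (u x - cm) * (cp - u x) :=
            mul_nonneg (mul_nonneg (mul_nonneg ha0.le (by linarith)) (by linarith)) (by linarith)
          rw [show -a * u x * (u x - cm) * (u x - cp)
              = a * u x * (u x - cm) * (cp - u x) from by ring]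
          exact hpos
      have := hmono ⟨le_refl 0, ht₁0⟩ ⟨ht₁0, le_refl t₁⟩ ht₁0
      have := ht₁K.2
      linarith
    -- monotone on Ici 0
    have hmono : MonotoneOn u (Ici 0) := by
      apply monotoneOn_of_deriv_nonneg (convex_Ici 0)
        (fun t ht => ((hd t ht).continuousAt).continuousWithinAt)
      · intro x hx
        rw [interior_Ici] at hx
        exact ((hd x (le_of_lt hx)).differentiableAt).differentiableWithinAt
      · intro x hx
        rw [interior_Ici] at hx
        rw [(hd x (le_of_lt hx)).deriv]
        have h1 : cm < u x := hgt_cm x (le_of_lt hx)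
        have h2 : u x ≤ cp := hle_cp x (le_of_lt hx)
        have hpos : 0 ≤ a * u x * (u x - cm) * (cp - u x) :=
          mul_nonneg (mul_nonneg (mul_nonneg ha0.le (by linarith)) (by linarith)) (by linarith)
        rw [show -a * u x * (u x - cm) * (u x - cp)
            = a * u x * (u x - cm) * (cp - u x) from by ring]
        exact hpos
    -- define v
    set v : ℝ → ℝ := fun t => u (max t 0) with hv
    have hvmono : Monotone v := fun x y hxy =>
      hmono (le_max_right x 0) (le_max_right y 0) (max_le_max hxy (le_refl 0))
    have hvbdd : BddAbove (range v) := ⟨cp, by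
      rintro y ⟨t, rfl⟩; exact hle_cp _ (le_max_right t 0)⟩
    have hvt : Tendsto v atTop (nhds (⨆ t, v t)) := tendsto_atTop_ciSup hvmono hvbdd
    set L := ⨆ t, v t with hL
    have hvle : ∀ t, v t ≤ L := fun t => le_ciSup hvbdd t
    have hule : ∀ t, 0 ≤ t → u t ≤ L := by
      intro t ht
      have : v t = u t := by rw [hv]; simp [max_eq_left ht]
      linarith [hvle t, this.le, this.ge]
    have huge : ∀ t, 0 ≤ t → u 0 ≤ u t := fun t ht =>
      hmono (le_refl (0:ℝ)) ht ht
    have hLcp : L ≤ cp := ciSup_le (fun t => hle_cp _ (le_max_right t 0))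
    have hLu0 : u 0 ≤ L := by
      have := hvle 0
      simpa [hv] using this
    -- L = cp
    have hLeq : L = cp := by
      by_contra hne
      have hLlt : L < cp := lt_of_le_of_ne hLcp hne
      set δ := a * (u 0) * (u 0 - cm) * (cp - L) with hδ
      have hδ0 : 0 < δ := by
        apply mul_pos (mul_pos (mul_pos ha0 _) _) <;> linarith [h0m, hcm0]
      -- u t ≥ u 0 + δ t
      have hgrow : ∀ t, 0 ≤ t → u 0 + δ * t ≤ u t := by
        intro t ht
        have hg : MonotoneOn (fun t => u t - δ * t) (Ici 0) := by
          have hdg : ∀ x : ℝ, 0 ≤ x →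
              HasDerivAt (fun t => u t - δ * t) (-a * u x * (u x - cm) * (u x - cp) - δ * 1) x :=
            fun x hx => (hd x hx).sub ((hasDerivAt_id x).const_mul δ)
          apply monotoneOn_of_deriv_nonneg (convex_Ici 0)
            (fun t ht => ((hdg t ht).continuousAt).continuousWithinAt)
          · intro x hx
            rw [interior_Ici] at hx
            exact ((hdg x (le_of_lt hx)).differentiableAt).differentiableWithinAt
          · intro x hx
            rw [interior_Ici] at hx
            rw [(hdg x (le_of_lt hx)).deriv]
            have h1 : u 0 ≤ u x := huge x (le_of_lt hx)
            have h2 : u x ≤ L := hule x (le_of_lt hx)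
            have h3 : cm < u 0 := h0m
            have hge : δ ≤ a * u x * (u x - cm) * (cp - u x) := by
              rw [hδ]
              exact tri_mono ha0.le (by linarith) (by linarith) (by linarith)
                h1 (by linarith) (by linarith)
            rw [show a * u x * (u x - cm) * (cp - u x)
                = -a * u x * (u x - cm) * (u x - cp) from by ring] at hge
            linarith
        have := hg (le_refl (0:ℝ)) (mem_Ici.mpr ht) ht
        simp only at this
        linarith
      obtain ⟨t, ht0, htbig⟩ : ∃ t, 0 ≤ t ∧ cp < u 0 + δ * t := by
        refine ⟨(cp - u 0) / δ + 1, ?_, ?_⟩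
        · have := div_nonneg (by linarith : (0:ℝ) ≤ cp - u 0) hδ0.le
          linarith
        · rw [mul_add, mul_div_cancel₀ _ (ne_of_gt hδ0)]
          linarith
      have := hgrow t ht0
      have := hle_cp t ht0
      linarith
    -- conclude
    rw [← hLeq]
    apply hvt.congr'
    filter_upwards [eventually_ge_atTop (0:ℝ)] with t ht
    rw [hv]; simp [max_eq_left ht]
  · -- Case u 0 = cp
    have hpin := gron_pin ha0 hd (le_refl (0:ℝ)) heq
    apply Tendsto.congr' _ (tendsto_const_nhds (x := cp))
    filter_upwards [eventually_ge_atTop (0:ℝ)] with t ht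
    exact (hpin t ht).symm
  · -- Case u 0 > cp : decreasing towards cp
    have hge_cp : ∀ t, 0 ≤ t → cp ≤ u t := by
      intro T hT
      by_contra hcon
      push_neg at hcon
      obtain ⟨t₀, ht₀mem, ht₀⟩ := intermediate_value_Icc' hT (hu_contOn T)
        (⟨le_of_lt hcon, le_of_lt hgt⟩ : cp ∈ Icc (u T) (u 0))
      have := gron_pin ha0 hd ht₀mem.1 ht₀ T ht₀mem.2
      linarith
    have hanti : AntitoneOn u (Ici 0) := by
      apply antitoneOn_of_deriv_nonpos (convex_Ici 0)
        (fun t ht => ((hd t ht).continuousAt).continuousWithinAt)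
      · intro x hx
        rw [interior_Ici] at hx
        exact ((hd x (le_of_lt hx)).differentiableAt).differentiableWithinAt
      · intro x hx
        rw [interior_Ici] at hx
        rw [(hd x (le_of_lt hx)).deriv]
        have h1 : cp ≤ u x := hge_cp x (le_of_lt hx)
        have hpos : 0 ≤ a * u x * (u x - cm) * (u x - cp) :=
          mul_nonneg (mul_nonneg (mul_nonneg ha0.le (by linarith)) (by linarith)) (by linarith)
        rw [show -a * u x * (u x - cm) * (u x - cp)
            = -(a * u x * (u x - cm) * (u x - cp)) from by ring]
        exact neg_nonpos.mpr hpos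
    set v : ℝ → ℝ := fun t => u (max t 0) with hv
    have hvanti : Antitone v := fun x y hxy =>
      hanti (le_max_right x 0) (le_max_right y 0) (max_le_max hxy (le_refl 0))
    have hvbdd : BddBelow (range v) := ⟨cp, by
      rintro y ⟨t, rfl⟩; exact hge_cp _ (le_max_right t 0)⟩
    have hvt : Tendsto v atTop (nhds (⨅ t, v t)) := tendsto_atTop_ciInf hvanti hvbdd
    set L := ⨅ t, v t with hL
    have hvge : ∀ t, L ≤ v t := fun t => ciInf_le hvbdd t
    have huge2 : ∀ t, 0 ≤ t → L ≤ u t := by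
      intro t ht
      have : v t = u t := by rw [hv]; simp [max_eq_left ht]
      linarith [hvge t, this.le, this.ge]
    have hule2 : ∀ t, 0 ≤ t → u t ≤ u 0 := fun t ht =>
      hanti (le_refl (0:ℝ)) ht ht
    have hLcp : cp ≤ L := le_ciInf (fun t => hge_cp _ (le_max_right t 0))
    have hLu0 : L ≤ u 0 := by
      have := hvge 0
      simpa [hv] using this
    have hLeq : L = cp := by
      by_contra hne
      have hLgt : cp < L := lt_of_le_of_ne hLcp (Ne.symm hne)
      set δ := a * L * (L - cm) * (L - cp) with hδ
      have hδ0 : 0 < δ := by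
        apply mul_pos (mul_pos (mul_pos ha0 _) _) <;> linarith [hcp0, hcmcp]
      have hdecay : ∀ t, 0 ≤ t → u t ≤ u 0 - δ * t := by
        intro t ht
        have hg : MonotoneOn (fun t => -u t - δ * t) (Ici 0) := by
          have hdg : ∀ x : ℝ, 0 ≤ x →
              HasDerivAt (fun t => -u t - δ * t)
                (-(-a * u x * (u x - cm) * (u x - cp)) - δ * 1) x :=
            fun x hx => ((hd x hx).neg).sub ((hasDerivAt_id x).const_mul δ)
          apply monotoneOn_of_deriv_nonneg (convex_Ici 0)
            (fun t ht => ((hdg t ht).continuousAt).continuousWithinAt)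
          · intro x hx
            rw [interior_Ici] at hx
            exact ((hdg x (le_of_lt hx)).differentiableAt).differentiableWithinAt
          · intro x hx
            rw [interior_Ici] at hx
            rw [(hdg x (le_of_lt hx)).deriv]
            have h1 : L ≤ u x := huge2 x (le_of_lt hx)
            have h2 : u x ≤ u 0 := hule2 x (le_of_lt hx)
            have hge : δ ≤ a * u x * (u x - cm) * (u x - cp) := by
              rw [hδ]
              exact tri_mono ha0.le (by linarith) (by linarith) (by linarith)
                h1 (by linarith) (by linarith)
            rw [show a * u x * (u x - cm) * (u x - cp)
                = -(-a * u x * (u x - cm) * (u x - cp)) from by ring] at hge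
            linarith
        have := hg (le_refl (0:ℝ)) (mem_Ici.mpr ht) ht
        simp only at this
        linarith
      obtain ⟨t, ht0, htbig⟩ : ∃ t, 0 ≤ t ∧ u 0 - δ * t < cp := by
        refine ⟨(u 0 - cp) / δ + 1, ?_, ?_⟩
        · have := div_nonneg (by linarith : (0:ℝ) ≤ u 0 - cp) hδ0.le
          linarith
        · rw [mul_add, mul_div_cancel₀ _ (ne_of_gt hδ0)]
          linarith
      have := hdecay t ht0
      have := hge_cp t ht0
      linarith
    rw [← hLeq]
    apply hvt.congr'
    filter_upwards [eventually_ge_atTop (0:ℝ)] with t ht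
    rw [hv]; simp [max_eq_left ht]
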